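/- For all n ≥ 1, 0 < a(2n+1) and a(2n+1) ≤ 1; moreover the map n ↦ a(2n+1) is a bijection from the positive integers onto the rational numbers in the open interval (0,1). -/

import Mathlib

private lemma den_lt_num_of_one_lt (q : ℚ) (hq : 1 < q) : (q.den : ℤ) < q.num := by
  have hd : (0:ℚ) < (q.den : ℚ) := by exact_mod_cast q.pos
  have : (1:ℚ) < (q.num : ℚ) / (q.den : ℚ) := by rwa [Rat.num_div_den]
  rw [lt_div_iff₀ hd, one_mul] at this
  exact_mod_cast this

private lemma measure_sub_one (q : ℚ) (hq : 1 < q) :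
    (q - 1).num.natAbs + (q - 1).den < q.num.natAbs + q.den := by
  have hd : (0:ℤ) < (q.den : ℤ) := by exact_mod_cast q.pos
  have hnd : (q.den : ℤ) < q.num := den_lt_num_of_one_lt q hq
  have hcop : IsCoprime q.num (q.den : ℤ) :=
    Int.isCoprime_iff_gcd_eq_one.mpr q.reduced
  have hcop2 : IsCoprime (q.num - (q.den : ℤ)) (q.den : ℤ) := by
    have := hcop.add_mul_left_left (-1)
    simpa [mul_neg_one, ← sub_eq_add_neg] using this
  have hcop3 : Nat.Coprime (q.num - (q.den : ℤ)).natAbs ((q.den : ℤ)).natAbs :=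
    Int.isCoprime_iff_gcd_eq_one.mp hcop2
  have key : q - 1 = (Int.cast (q.num - (q.den : ℤ)) : ℚ) / (Int.cast (q.den : ℤ) : ℚ) := by
    push_cast
    rw [sub_div, Rat.num_div_den]
    congr 1
    rw [div_self]
    exact_mod_cast q.den_pos.ne'
  have hnum : (q - 1).num = q.num - (q.den : ℤ) := by
    rw [key]; exact Rat.num_div_eq_of_coprime hd hcop3
  have hden : ((q - 1).den : ℤ) = (q.den : ℤ) := by
    rw [key]; exact Rat.den_div_eq_of_coprime hd hcop3
  rw [hnum]
  omega

private lemma measure_inv (q : ℚ) (hq : 0 < q) :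
    q⁻¹.num.natAbs + q⁻¹.den = q.num.natAbs + q.den := by
  have hn : 0 < q.num := Rat.num_pos.mpr hq
  have hcop : Nat.Coprime ((q.den : ℤ)).natAbs q.num.natAbs := by
    simpa [Int.natAbs_natCast] using q.reduced.symm
  have key : q⁻¹ = (Int.cast (q.den : ℤ) : ℚ) / (Int.cast q.num : ℚ) := by
    rw [Rat.inv_def, Rat.divInt_eq_div]
  have hnum : q⁻¹.num = (q.den : ℤ) := by
    rw [key]; exact Rat.num_div_eq_of_coprime hn hcop
  have hden : ((q⁻¹).den : ℤ) = q.num := by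
    rw [key]; exact Rat.den_div_eq_of_coprime hn hcop
  rw [hnum]
  omega

private lemma nat_split (n : ℕ) (hn : 1 ≤ n) :
    n = 1 ∨ (∃ k, 1 ≤ k ∧ n = 2 * k) ∨ (∃ k, 1 ≤ k ∧ n = 2 * k + 1) := by
  rcases Nat.even_or_odd n with ⟨k, hk⟩ | ⟨k, hk⟩
  · exact Or.inr (Or.inl ⟨k, by omega, by omega⟩)
  · by_cases hk0 : k = 0
    · left; omega
    · exact Or.inr (Or.inr ⟨k, by omega, by omega⟩)

section main

variable (a : ℕ → ℚ) (h1 : a 1 = 1)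
    (h2 : ∀ n : ℕ, 1 ≤ n → a (2 * n) = a n + 1)
    (h3 : ∀ n : ℕ, 1 ≤ n → a (2 * n + 1) = 1 / a (2 * n))

include h1 h2 h3

private lemma apos : ∀ n : ℕ, 1 ≤ n → 0 < a n := by
  intro n
  induction n using Nat.strong_induction_on with
  | _ n ih =>
    intro hn
    rcases nat_split n hn with h | ⟨k, hk, rfl⟩ | ⟨k, hk, rfl⟩
    · rw [h, h1]; norm_num
    · rw [h2 k hk]
      have := ih k (by omega) hk
      linarith
    · rw [h3 k hk, h2 k hk]
      have := ih k (by omega) hk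
      positivity

private lemma aeven_gt (k : ℕ) (hk : 1 ≤ k) : 1 < a (2 * k) := by
  rw [h2 k hk]
  have := apos a h1 h2 h3 k hk
  linarith

private lemma aodd_mem (k : ℕ) (hk : 1 ≤ k) : 0 < a (2 * k + 1) ∧ a (2 * k + 1) < 1 := by
  rw [h3 k hk, h2 k hk]
  have := apos a h1 h2 h3 k hk
  constructor
  · positivity
  · rw [div_lt_one (by linarith)]
    linarith

private lemma ainj : ∀ m : ℕ, ∀ n : ℕ, 1 ≤ m → 1 ≤ n → a m = a n → m = n := by
  intro m
  induction m using Nat.strong_induction_on with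
  | _ m ih =>
    intro n hm hn heq
    rcases nat_split m hm with hm1 | ⟨j, hj, rfl⟩ | ⟨j, hj, rfl⟩ <;>
      rcases nat_split n hn with hn1 | ⟨k, hk, rfl⟩ | ⟨k, hk, rfl⟩
    · omega
    · exfalso
      rw [hm1, h1] at heq
      have := aeven_gt a h1 h2 h3 k hk
      linarith
    · exfalso
      rw [hm1, h1] at heq
      have := (aodd_mem a h1 h2 h3 k hk).2
      linarith
    · exfalso
      rw [hn1, h1] at heq
      have := aeven_gt a h1 h2 h3 j hj
      linarith
    · rw [h2 j hj, h2 k hk] at heq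
      have : a j = a k := by linarith
      have := ih j (by omega) k hj hk this
      omega
    · exfalso
      have h1' := aeven_gt a h1 h2 h3 j hj
      have h2' := (aodd_mem a h1 h2 h3 k hk).2
      linarith
    · exfalso
      rw [hn1, h1] at heq
      have := (aodd_mem a h1 h2 h3 j hj).2
      linarith
    · exfalso
      have h1' := aeven_gt a h1 h2 h3 k hk
      have h2' := (aodd_mem a h1 h2 h3 j hj).2
      linarith
    · rw [h3 j hj, h3 k hk, h2 j hj, h2 k hk] at heq
      have hja := apos a h1 h2 h3 j hj
      have hka := apos a h1 h2 h3 k hk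
      have hj0 : a j + 1 ≠ 0 := by linarith
      have hk0 : a k + 1 ≠ 0 := by linarith
      field_simp at heq
      have : a j = a k := by linarith
      have := ih j (by omega) k hj hk this
      omega

private lemma asurj : ∀ N : ℕ, ∀ q : ℚ, 0 < q → q.num.natAbs + q.den ≤ N →
    ∃ n : ℕ, 1 ≤ n ∧ a n = q := by
  intro N
  induction N with
  | zero =>
    intro q _ hle
    have := q.pos
    omega
  | succ N ih =>
    intro q hq hle
    rcases lt_trichotomy q 1 with hlt | heq | hgt
    · have hinv : 1 < q⁻¹ := one_lt_inv₀ hq |>.mpr hlt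
      have hr : 0 < q⁻¹ - 1 := by linarith
      have hmeas : (q⁻¹ - 1).num.natAbs + (q⁻¹ - 1).den ≤ N := by
        have := measure_sub_one q⁻¹ hinv
        have := measure_inv q hq
        omega
      obtain ⟨n, hn, han⟩ := ih (q⁻¹ - 1) hr hmeas
      refine ⟨2 * n + 1, by omega, ?_⟩
      rw [h3 n hn, h2 n hn, han]
      have hq0 : q ≠ 0 := ne_of_gt hq
      field_simp
      ring
    · exact ⟨1, le_refl 1, by rw [h1, heq]⟩
    · have hr : 0 < q - 1 := by linarith
      have hmeas : (q - 1).num.natAbs + (q - 1).den ≤ N := by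
        have := measure_sub_one q hgt
        omega
      obtain ⟨n, hn, han⟩ := ih (q - 1) hr hmeas
      refine ⟨2 * n, by omega, ?_⟩
      rw [h2 n hn, han]
      ring

end main

theorem stmt4 (a : ℕ → ℚ) (h1 : a 1 = 1)
    (h2 : ∀ n : ℕ, 1 ≤ n → a (2 * n) = a n + 1)
    (h3 : ∀ n : ℕ, 1 ≤ n → a (2 * n + 1) = 1 / a (2 * n)) :
    (∀ n : ℕ, 1 ≤ n → 0 < a (2 * n + 1) ∧ a (2 * n + 1) ≤ 1) ∧
      Set.BijOn (fun n : ℕ => a (2 * n + 1)) {n : ℕ | 1 ≤ n}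
        {q : ℚ | 0 < q ∧ q < 1} := by
  constructor
  · intro n hn
    have h := aodd_mem a h1 h2 h3 n hn
    exact ⟨h.1, le_of_lt h.2⟩
  · refine ⟨?_, ?_, ?_⟩
    · intro n hn
      exact aodd_mem a h1 h2 h3 n hn
    · intro m hm n hn heq
      have := ainj a h1 h2 h3 (2 * m + 1) (2 * n + 1) (by omega) (by omega) heq
      omega
    · intro q hq
      obtain ⟨hq0, hq1⟩ := hq
      have hinv : 1 < q⁻¹ := one_lt_inv₀ hq0 |>.mpr hq1
      have hr : 0 < q⁻¹ - 1 := by linarith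
      obtain ⟨n, hn, han⟩ := asurj a h1 h2 h3 ((q⁻¹ - 1).num.natAbs + (q⁻¹ - 1).den)
        (q⁻¹ - 1) hr (le_refl _)
      refine ⟨n, hn, ?_⟩
      simp only
      rw [h3 n hn, h2 n hn, han]
      have hq' : q ≠ 0 := ne_of_gt hq0
      field_simp
      ring
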